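/- Let n ≥ 1 be a natural number, E a finite-dimensional real normed vector space, H : ℝ → ℝ a differentiable function with n·H(s) > 2 for all s, and T, N, y : ℝ → E differentiable functions satisfying, for all s: T'(s) = −(n H(s)/2)·N(s) + y(s), N'(s) = (n H(s)/2)·T(s), and y'(s) = T(s). Define κ(s) = (1/2)√(n²H(s)² − 4), τ(s) = 2 n H'(s)/(n²H(s)² − 4), 𝐧(s) = −(n H(s)/√(n²H(s)² − 4))·N(s) + (2/√(n²H(s)² − 4))·y(s), and 𝐛(s) = (2/√(n²H(s)² − 4))·N(s) − (n H(s)/√(n²H(s)² − 4))·y(s). Then for all s: T'(s) = κ(s)·𝐧(s), 𝐧'(s) = −κ(s)·T(s) + τ(s)·𝐛(s), and 𝐛'(s) = τ(s)·𝐧(s). -/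

import Mathlib

/-- Frenet–Serret computation for an integral curve of `e₁ = ∇H/|∇H|` on a
biconservative hypersurface of hyperbolic space `Hⁿ⁺¹`, in the case `nH > 2`. -/
theorem stmt_4 (n : ℕ) (hn : 1 ≤ n) (E : Type*) [NormedAddCommGroup E]
    [NormedSpace ℝ E] [FiniteDimensional ℝ E]
    (H : ℝ → ℝ) (hH : Differentiable ℝ H) (hH2 : ∀ s : ℝ, (n : ℝ) * H s > 2)
    (T N y : ℝ → E) (hT : Differentiable ℝ T) (hN : Differentiable ℝ N)
    (hy : Differentiable ℝ y)
    (hT' : ∀ s : ℝ, deriv T s = (-((n : ℝ) * H s / 2)) • N s + y s)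
    (hN' : ∀ s : ℝ, deriv N s = ((n : ℝ) * H s / 2) • T s)
    (hy' : ∀ s : ℝ, deriv y s = T s)
    (κ τ : ℝ → ℝ) (Fn Fb : ℝ → E)
    (hκ : ∀ s : ℝ, κ s = (1 / 2) * Real.sqrt ((n : ℝ) ^ 2 * H s ^ 2 - 4))
    (hτ : ∀ s : ℝ, τ s = 2 * (n : ℝ) * deriv H s / ((n : ℝ) ^ 2 * H s ^ 2 - 4))
    (hFn : ∀ s : ℝ, Fn s =
      (-((n : ℝ) * H s / Real.sqrt ((n : ℝ) ^ 2 * H s ^ 2 - 4))) • N s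
        + (2 / Real.sqrt ((n : ℝ) ^ 2 * H s ^ 2 - 4)) • y s)
    (hFb : ∀ s : ℝ, Fb s =
      (2 / Real.sqrt ((n : ℝ) ^ 2 * H s ^ 2 - 4)) • N s
        - ((n : ℝ) * H s / Real.sqrt ((n : ℝ) ^ 2 * H s ^ 2 - 4)) • y s) :
    ∀ s : ℝ, deriv T s = κ s • Fn s ∧
      deriv Fn s = (-(κ s)) • T s + τ s • Fb s ∧
      deriv Fb s = τ s • Fn s := by
  intro s
  have hD : (0:ℝ) < (n : ℝ) ^ 2 * H s ^ 2 - 4 := by nlinarith [hH2 s]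
  set S := Real.sqrt ((n : ℝ) ^ 2 * H s ^ 2 - 4) with hSdef
  have hSpos : 0 < S := Real.sqrt_pos.mpr hD
  have hSne : S ≠ 0 := ne_of_gt hSpos
  have hS2 : S ^ 2 = (n : ℝ) ^ 2 * H s ^ 2 - 4 := Real.sq_sqrt hD.le
  -- derivative of the inner polynomial
  have hg : HasDerivAt (fun x => (n : ℝ) ^ 2 * H x ^ 2 - 4)
      ((n : ℝ) ^ 2 * ((2 : ℕ) * H s ^ 1 * deriv H s)) s :=
    ((((hH s).hasDerivAt).pow 2).const_mul ((n : ℝ) ^ 2)).sub_const 4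
  -- derivative of the square root
  have hG : HasDerivAt (fun x => Real.sqrt ((n : ℝ) ^ 2 * H x ^ 2 - 4))
      (1 / (2 * S) * ((n : ℝ) ^ 2 * ((2 : ℕ) * H s ^ 1 * deriv H s))) s :=
    (Real.hasDerivAt_sqrt (ne_of_gt hD)).comp s hg
  set G' := (1 / (2 * S) * ((n : ℝ) ^ 2 * ((2 : ℕ) * H s ^ 1 * deriv H s))) with hG'def
  -- derivative of the scalar coefficients
  have ha : HasDerivAt (fun x => -((n : ℝ) * H x / Real.sqrt ((n : ℝ) ^ 2 * H x ^ 2 - 4)))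
      (-(((n : ℝ) * deriv H s * S - (n : ℝ) * H s * G') / S ^ 2)) s :=
    (((hH s).hasDerivAt.const_mul ((n : ℝ))).div hG hSne).neg
  have hb : HasDerivAt (fun x => (2 : ℝ) / Real.sqrt ((n : ℝ) ^ 2 * H x ^ 2 - 4))
      ((0 * S - 2 * G') / S ^ 2) s :=
    (hasDerivAt_const s (2:ℝ)).div hG hSne
  -- derivative of Fn
  have hFnEq : Fn = fun x =>
      (-((n : ℝ) * H x / Real.sqrt ((n : ℝ) ^ 2 * H x ^ 2 - 4))) • N x
        + (2 / Real.sqrt ((n : ℝ) ^ 2 * H x ^ 2 - 4)) • y x := funext hFn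
  have hFbEq : Fb = fun x =>
      (2 / Real.sqrt ((n : ℝ) ^ 2 * H x ^ 2 - 4)) • N x
        - ((n : ℝ) * H x / Real.sqrt ((n : ℝ) ^ 2 * H x ^ 2 - 4)) • y x := funext hFb
  have hFnD : HasDerivAt Fn
      (((-((n : ℝ) * H s / S)) • deriv N s
          + (-(((n : ℝ) * deriv H s * S - (n : ℝ) * H s * G') / S ^ 2)) • N s)
        + ((2 / S) • deriv y s + ((0 * S - 2 * G') / S ^ 2) • y s)) s := by
    rw [hFnEq]
    exact (ha.smul (hN s).hasDerivAt).add (hb.smul (hy s).hasDerivAt)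
  have hFbD : HasDerivAt Fb
      (((2 / S) • deriv N s + ((0 * S - 2 * G') / S ^ 2) • N s)
        - (((n : ℝ) * H s / S) • deriv y s
            + (((n : ℝ) * deriv H s * S - (n : ℝ) * H s * G') / S ^ 2) • y s)) s := by
    rw [hFbEq]
    exact (hb.smul (hN s).hasDerivAt).sub
      ((((hH s).hasDerivAt.const_mul ((n : ℝ))).div hG hSne).smul (hy s).hasDerivAt)
  refine ⟨?_, ?_, ?_⟩
  · rw [hT' s, hκ s, hFn s, ← hSdef]
    match_scalars <;> (field_simp; try ring)
  · rw [hFnD.deriv, hκ s, hτ s, hFb s, hN' s, hy' s, ← hSdef, hG'def]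
    match_scalars <;> (field_simp; try ring)
    · linear_combination hS2
    · linear_combination (-(n : ℝ) ^ 2 * H s ^ 2 * deriv H s) * hS2
    · linear_combination (2 * (n : ℝ) ^ 2 * H s * deriv H s) * hS2
  · rw [hFbD.deriv, hτ s, hFn s, hN' s, hy' s, ← hSdef, hG'def]
    match_scalars <;> (field_simp; try ring)
    · linear_combination (2 * (n : ℝ) ^ 2 * H s * deriv H s) * hS2
    · linear_combination (-(n : ℝ) ^ 2 * H s ^ 2 * deriv H s) * hS2
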